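/- (One-step contraction) Let f : ℝ^n → ℝ be differentiable, convex, coordinate-wise smooth with parameters (L_1,…,L_n) (each L_i > 0), and σ_β-strongly convex with respect to ‖·‖_{L_β} for some β ∈ [0,1] and σ_β > 0. Let x* be a minimizer of f. Set α := (1−β)/2, S_α := Σ_i L_i^α, p_i := L_i^α/S_α, τ := 2/(1 + √(4S_α²/σ_β + 1)), and η := 1/(τ·S_α²). Fix y_k, z_k ∈ ℝ^n, let x_{k+1} := τ·z_k + (1−τ)·y_k, and for each i define y^{(i)} := x_{k+1} − (1/L_i)·∇_i f(x_{k+1})·e_i and z^{(i)} := (1/(1+ησ_β))·(z_k + ησ_β·x_{k+1} − (η/(p_i·L_i^β))·∇_i f(x_{k+1})·e_i). Then: Σ_{i=1}^n p_i·[ (f(y^{(i)}) − f(x*)) + (τ/(2η(1−τ)))·‖z^{(i)} − x*‖²_{L_β} ] ≤ (1−τ)·[ (f(y_k) − f(x*)) + (τ/(2η(1−τ)))·‖z_k − x*‖²_{L_β} ]. -/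

import Mathlib

/-- The i-th standard basis vector of ℝ^n. -/
def basisVec {n : ℕ} (i : Fin n) : Fin n → ℝ := Pi.single i 1

/-- The i-th partial derivative ∇_i f(x). -/
noncomputable def coordGrad {n : ℕ} (f : (Fin n → ℝ) → ℝ) (x : Fin n → ℝ) (i : Fin n) : ℝ :=
  fderiv ℝ f x (basisVec i)

/-- f is coordinate-wise smooth with parameters (L_1, …, L_n):
`|∇_i f(x + δ e_i) − ∇_i f(x)| ≤ L_i |δ|` for all x, δ, i. -/
def CoordSmooth {n : ℕ} (f : (Fin n → ℝ) → ℝ) (L : Fin n → ℝ) : Prop :=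
  ∀ (x : Fin n → ℝ) (δ : ℝ) (i : Fin n),
    |coordGrad f (x + δ • basisVec i) i - coordGrad f x i| ≤ L i * |δ|

/-- Weighted squared norm ‖v‖²_{L_β} := Σ_i L_i^β · v_i². -/
noncomputable def wnormSq {n : ℕ} (L : Fin n → ℝ) (β : ℝ) (v : Fin n → ℝ) : ℝ :=
  ∑ i, L i ^ β * v i ^ 2

/-- f is σ-strongly convex with respect to the weighted norm ‖·‖_{L_β}:
`f(y) ≥ f(x) + ⟨∇f(x), y − x⟩ + (σ/2)‖y − x‖²_{L_β}` for all x, y. -/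
def StronglyConvexW {n : ℕ} (f : (Fin n → ℝ) → ℝ) (L : Fin n → ℝ) (β σ : ℝ) : Prop :=
  ∀ x y : Fin n → ℝ,
    f x + (∑ i, coordGrad f x i * (y i - x i)) + σ / 2 * wnormSq L β (y - x) ≤ f y

lemma quad_upper {g g' : ℝ → ℝ} {C : ℝ} (hC : 0 ≤ C)
    (hd : ∀ t, HasDerivAt g (g' t) t)
    (hlip : ∀ u : ℝ, |g' u - g' 0| ≤ C * |u|) (t : ℝ) :
    g t ≤ g 0 + g' 0 * t + C / 2 * t ^ 2 := by
  set h : ℝ → ℝ := fun u => g 0 + g' 0 * u + C / 2 * u ^ 2 - g u with hh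
  have hd' : ∀ u, HasDerivAt h (g' 0 + C * u - g' u) u := by
    intro u
    have h1 : HasDerivAt (fun v : ℝ => g 0 + g' 0 * v + C / 2 * v ^ 2)
        (g' 0 + C * u) u := by
      have := ((hasDerivAt_id u).const_mul (g' 0)).const_add (g 0)
      have h2 := (hasDerivAt_pow 2 u).const_mul (C / 2)
      exact (this.add h2).congr_deriv (by push_cast; ring)
    exact h1.sub (hd u)
  have hcont : Continuous h := by
    have : Differentiable ℝ h := fun u => (hd' u).differentiableAt
    exact this.continuous
  have hderiv : ∀ u, deriv h u = g' 0 + C * u - g' u := fun u => (hd' u).deriv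
  have h0 : h 0 = 0 := by simp [hh]
  have key : 0 ≤ h t := by
    rcases le_or_gt 0 t with ht | ht
    · have mono : MonotoneOn h (Set.Ici 0) :=
        monotoneOn_of_deriv_nonneg (convex_Ici 0) hcont.continuousOn
          (fun u _ => ((hd' u).differentiableAt).differentiableWithinAt)
          (fun u hu => by
            rw [hderiv u]
            rw [interior_Ici] at hu
            have := hlip u
            rw [abs_of_pos (show (0:ℝ) < u from hu)] at this
            have := abs_le.mp this
            linarith [this.2])
      have := mono Set.self_mem_Ici (Set.mem_Ici.mpr ht) ht
      linarith [h0 ▸ this]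
    · have anti : AntitoneOn h (Set.Iic 0) :=
        antitoneOn_of_deriv_nonpos (convex_Iic 0) hcont.continuousOn
          (fun u _ => ((hd' u).differentiableAt).differentiableWithinAt)
          (fun u hu => by
            rw [hderiv u]
            rw [interior_Iic] at hu
            have := hlip u
            rw [abs_of_neg (show u < (0:ℝ) from hu)] at this
            have := abs_le.mp this
            linarith [this.1])
      have := anti (Set.mem_Iic.mpr ht.le) Set.self_mem_Iic ht.le
      linarith [h0 ▸ this]
  simp only [hh] at key
  linarith

lemma coord_descent {n : ℕ} (f : (Fin n → ℝ) → ℝ) (L : Fin n → ℝ)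
    (hf : Differentiable ℝ f) (hL : ∀ i, 0 < L i) (hsm : CoordSmooth f L)
    (x : Fin n → ℝ) (i : Fin n) :
    f (x - (1 / L i * coordGrad f x i) • basisVec i)
      ≤ f x - (coordGrad f x i) ^ 2 / (2 * L i) := by
  set e := basisVec i with he
  set φ : ℝ → ℝ := fun t => f (x + t • e) with hφ
  set G : ℝ → ℝ := fun t => coordGrad f (x + t • e) i with hG
  have hd : ∀ t, HasDerivAt φ (G t) t := by
    intro t
    have hline : HasDerivAt (fun t : ℝ => x + t • e) e t := by
      simpa using ((hasDerivAt_id t).smul_const e).const_add x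
    exact (hf (x + t • e)).hasFDerivAt.comp_hasDerivAt t hline
  have hlip : ∀ u : ℝ, |G u - G 0| ≤ L i * |u| := by
    intro u
    have := hsm (x + (0:ℝ) • e) (u - 0) i
    simp only [zero_smul, add_zero, sub_zero] at this ⊢
    have heq : x + u • e = x + u • basisVec i := rfl
    simpa [hG, he] using this
  have := quad_upper (hL i).le hd hlip (-(1 / L i * coordGrad f x i))
  have hφ0 : φ 0 = f x := by simp [hφ]
  have hG0 : G 0 = coordGrad f x i := by simp [hG]
  have hφt : φ (-(1 / L i * coordGrad f x i)) =
      f (x - (1 / L i * coordGrad f x i) • e) := by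
    simp [hφ, sub_eq_add_neg, neg_smul]
  rw [hφ0, hG0, hφt] at this
  have hLi := (hL i).ne'
  calc f (x - (1 / L i * coordGrad f x i) • e)
      ≤ f x + coordGrad f x i * -(1 / L i * coordGrad f x i)
        + L i / 2 * (-(1 / L i * coordGrad f x i)) ^ 2 := this
    _ = f x - (coordGrad f x i) ^ 2 / (2 * L i) := by field_simp; ring

lemma wsum_shift {n : ℕ} (N md : Fin n → ℝ) (i : Fin n) (c : ℝ) :
    ∑ j, N j * (md j - c * basisVec i j) ^ 2
      = (∑ j, N j * (md j) ^ 2) - 2 * c * (N i) * (md i) + c ^ 2 * (N i) := by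
  have h : ∀ j, N j * (md j - c * basisVec i j) ^ 2
      = N j * (md j) ^ 2 + (N j * (md j - c * basisVec i j) ^ 2 - N j * (md j) ^ 2) :=
    fun j => by ring
  rw [Finset.sum_congr rfl fun j _ => h j, Finset.sum_add_distrib]
  have h2 : (∑ j, (N j * (md j - c * basisVec i j) ^ 2 - N j * (md j) ^ 2))
      = -(2 * c * (N i) * (md i)) + c ^ 2 * (N i) := by
    rw [Finset.sum_eq_single i]
    · simp only [basisVec, Pi.single_eq_same]
      ring
    · intro j _ hji
      simp [basisVec, Pi.single_eq_of_ne hji]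
    · intro h
      exact absurd (Finset.mem_univ i) h
  rw [h2]
  ring

set_option maxHeartbeats 2000000 in
/-- One-step contraction of NU_ACDM: the expected potential
`(f(y) − f(x*)) + (τ/(2η(1−τ)))‖z − x*‖²_{L_β}` contracts by a factor `1 − τ`. -/
theorem stmt_6 (n : ℕ) (f : (Fin n → ℝ) → ℝ) (L : Fin n → ℝ)
    (hf : Differentiable ℝ f) (hconv : ConvexOn ℝ Set.univ f) (hL : ∀ i, 0 < L i)
    (hsmooth : CoordSmooth f L)
    (β σβ : ℝ) (hβ : β ∈ Set.Icc (0 : ℝ) 1) (hσ : 0 < σβ)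
    (hsc : StronglyConvexW f L β σβ)
    (xstar : Fin n → ℝ) (hxstar : ∀ v, f xstar ≤ f v)
    (α Sα : ℝ) (hα : α = (1 - β) / 2) (hS : Sα = ∑ i, L i ^ α)
    (p : Fin n → ℝ) (hp : ∀ i, p i = L i ^ α / Sα)
    (τ η : ℝ) (hτ : τ = 2 / (1 + Real.sqrt (4 * Sα ^ 2 / σβ + 1)))
    (hη : η = 1 / (τ * Sα ^ 2))
    (yk zk xk1 : Fin n → ℝ) (hx : xk1 = τ • zk + (1 - τ) • yk)
    (Y Z : Fin n → Fin n → ℝ)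
    (hY : ∀ i, Y i = xk1 - (1 / L i * coordGrad f xk1 i) • basisVec i)
    (hZ : ∀ i, Z i = (1 / (1 + η * σβ)) •
      (zk + (η * σβ) • xk1 - (η / (p i * L i ^ β) * coordGrad f xk1 i) • basisVec i)) :
    ∑ i, p i * ((f (Y i) - f xstar)
        + τ / (2 * η * (1 - τ)) * wnormSq L β (Z i - xstar))
      ≤ (1 - τ) * ((f yk - f xstar)
        + τ / (2 * η * (1 - τ)) * wnormSq L β (zk - xstar)) := by
  rcases Nat.eq_zero_or_pos n with hn | hn
  · subst hn
    have hS0 : Sα = 0 := by simp [hS]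
    have hτ1 : τ = 1 := by
      rw [hτ, hS0]
      norm_num
    rw [hτ1]
    simp
  -- main case
  have hne : Nonempty (Fin n) := ⟨⟨0, hn⟩⟩
  have hβ0 : (0:ℝ) ≤ β := hβ.1
  have hLα : ∀ i, 0 < L i ^ α := fun i => Real.rpow_pos_of_pos (hL i) α
  have hNpos : ∀ i, 0 < L i ^ β := fun i => Real.rpow_pos_of_pos (hL i) β
  have hSpos : 0 < Sα := by
    rw [hS]; exact Finset.sum_pos (fun i _ => hLα i) Finset.univ_nonempty
  have hppos : ∀ i, 0 < p i := fun i => by rw [hp i]; exact div_pos (hLα i) hSpos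
  have hpsum : ∑ i, p i = 1 := by
    simp only [hp]
    rw [← Finset.sum_div, ← hS]
    field_simp
  have harg : 0 < 4 * Sα ^ 2 / σβ := by positivity
  have hr2 : Real.sqrt (4 * Sα ^ 2 / σβ + 1) ^ 2 = 4 * Sα ^ 2 / σβ + 1 :=
    Real.sq_sqrt (by linarith)
  have hr1 : 1 < Real.sqrt (4 * Sα ^ 2 / σβ + 1) := by
    nlinarith [Real.sqrt_nonneg (4 * Sα ^ 2 / σβ + 1)]
  set r := Real.sqrt (4 * Sα ^ 2 / σβ + 1) with hrdef
  have hτpos : 0 < τ := by rw [hτ]; exact div_pos two_pos (by linarith)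
  have hτ1 : τ < 1 := by
    rw [hτ, div_lt_one (by linarith)]; linarith
  have hspos : 0 < 1 - τ := by linarith
  have hηrole : η * τ * Sα ^ 2 = 1 := by
    rw [hη]; field_simp
  have hηpos : 0 < η := by
    rw [hη]; exact one_div_pos.mpr (mul_pos hτpos (by positivity))
  have hrr : σβ * r ^ 2 = 4 * Sα ^ 2 + σβ := by rw [hr2]; field_simp
  have hkey : η * σβ * (1 - τ) = τ := by
    have h1 : σβ * (1 - τ) = τ ^ 2 * Sα ^ 2 := by
      have h1r : (0:ℝ) < 1 + r := by linarith
      rw [hτ]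
      field_simp
      linear_combination hrr
    nlinarith [hηrole, h1]
  have hσval : σβ = τ / (η * (1 - τ)) := by
    rw [eq_div_iff (by positivity)]
    first
    | linear_combination hkey
    | linear_combination -hkey
  have hcinv : 1 / (1 + η * σβ) = 1 - τ := by
    have hc : (0:ℝ) < 1 + η * σβ := by nlinarith [mul_pos hηpos hσ]
    field_simp
    first
    | linear_combination hkey
    | linear_combination -hkey
    | linear_combination (-2 : ℝ) * hkey
    | linear_combination (2 : ℝ) * hkey
  -- per-coordinate descent
  have hdesc : ∀ i, f (Y i) ≤ f xk1 - coordGrad f xk1 i ^ 2 / (2 * L i) := by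
    intro i
    rw [hY i]
    exact coord_descent f L hf hL hsmooth xk1 i
  have hI1 : (∑ i, p i * f (Y i))
      + (∑ i, p i * (coordGrad f xk1 i ^ 2 / (2 * L i))) ≤ f xk1 := by
    have h1 : (∑ i, p i * f (Y i))
        ≤ ∑ i, p i * (f xk1 - coordGrad f xk1 i ^ 2 / (2 * L i)) :=
      Finset.sum_le_sum fun i _ => mul_le_mul_of_nonneg_left (hdesc i) (hppos i).le
    have h2 : (∑ i, p i * (f xk1 - coordGrad f xk1 i ^ 2 / (2 * L i)))
        = f xk1 - ∑ i, p i * (coordGrad f xk1 i ^ 2 / (2 * L i)) := by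
      simp only [mul_sub]
      rw [Finset.sum_sub_distrib, ← Finset.sum_mul, hpsum, one_mul]
    linarith
  have hwnn : ∀ v : Fin n → ℝ, 0 ≤ wnormSq L β v := fun v =>
    Finset.sum_nonneg fun i _ => mul_nonneg (hNpos i).le (sq_nonneg _)
  have hI2 : f xk1 + (∑ i, coordGrad f xk1 i * (yk i - xk1 i)) ≤ f yk := by
    have h := hsc xk1 yk
    nlinarith [hwnn (yk - xk1), half_pos hσ]
  have hI3 : f xk1 - (∑ i, coordGrad f xk1 i * (xk1 i - xstar i))
      + σβ / 2 * wnormSq L β (xk1 - xstar) ≤ f xstar := by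
    have h := hsc xk1 xstar
    have hsum : (∑ i, coordGrad f xk1 i * (xstar i - xk1 i))
        = -(∑ i, coordGrad f xk1 i * (xk1 i - xstar i)) := by
      rw [← Finset.sum_neg_distrib]
      exact Finset.sum_congr rfl fun i _ => by ring
    have hw : wnormSq L β (xstar - xk1) = wnormSq L β (xk1 - xstar) := by
      unfold wnormSq
      exact Finset.sum_congr rfl fun i _ => by simp only [Pi.sub_apply]; ring
    rw [hsum, hw] at h
    linarith
  have hxj : ∀ j, xk1 j = τ * zk j + (1 - τ) * yk j := by
    intro j
    rw [hx]
    simp [Pi.add_apply, Pi.smul_apply, smul_eq_mul]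
  have hE3 : τ * (∑ i, coordGrad f xk1 i * (zk i - xk1 i))
      + (1 - τ) * (∑ i, coordGrad f xk1 i * (yk i - xk1 i)) = 0 := by
    rw [Finset.mul_sum, Finset.mul_sum, ← Finset.sum_add_distrib]
    apply Finset.sum_eq_zero
    intro j _
    linear_combination (-(coordGrad f xk1 j)) * hxj j
  -- Young's inequality ingredients
  have h2S : ∀ i, L i ^ α ≤ Sα := fun i =>
    hS ▸ Finset.single_le_sum (fun j _ => (hLα j).le) (Finset.mem_univ i)
  have hLsplit : ∀ i, L i ^ α * (L i ^ α * L i ^ β) = L i := by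
    intro i
    rw [← Real.rpow_add (hL i), ← Real.rpow_add (hL i),
      show α + (α + β) = (1:ℝ) by rw [hα]; ring, Real.rpow_one]
  have hpn : ∀ i, τ * η * L i ≤ p i * L i ^ β := by
    intro i
    have hpe : p i * L i ^ β = L i / (Sα * L i ^ α) := by
      rw [hp i, div_mul_eq_mul_div, div_eq_div_iff hSpos.ne'
        (mul_pos hSpos (hLα i)).ne']
      linear_combination Sα * hLsplit i
    rw [hpe, le_div_iff₀ (mul_pos hSpos (hLα i))]
    nlinarith [mul_nonneg (mul_nonneg (mul_nonneg (mul_pos hτpos hηpos).le hSpos.le)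
        (hL i).le) (sub_nonneg.mpr (h2S i)), hηrole, hL i, hτpos, hηpos, hSpos]
  have hA4 : 0 ≤ τ * (∑ i, p i * (coordGrad f xk1 i ^ 2 / (2 * L i)))
      - τ ^ 2 * (∑ i, coordGrad f xk1 i * (zk i - xk1 i))
      + τ ^ 2 / (2 * η) * wnormSq L β (zk - xk1) := by
    have hterm : ∀ i, 0 ≤ τ * (p i * (coordGrad f xk1 i ^ 2 / (2 * L i)))
        - τ ^ 2 * (coordGrad f xk1 i * (zk i - xk1 i))
        + τ ^ 2 / (2 * η) * (L i ^ β * (zk i - xk1 i) ^ 2) := by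
      intro i
      have heq : τ * (p i * (coordGrad f xk1 i ^ 2 / (2 * L i)))
          - τ ^ 2 * (coordGrad f xk1 i * (zk i - xk1 i))
          + τ ^ 2 / (2 * η) * (L i ^ β * (zk i - xk1 i) ^ 2)
          = τ * ((η * p i * coordGrad f xk1 i - τ * η * L i * (zk i - xk1 i)) ^ 2
             + τ * η * L i * (p i * L i ^ β - τ * η * L i) * (zk i - xk1 i) ^ 2)
            / (2 * η ^ 2 * L i * p i) := by
        field_simp [hηpos.ne', (hL i).ne', (hppos i).ne']
        ring
      rw [heq]
      apply div_nonneg _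
        (by nlinarith [mul_pos (mul_pos (mul_pos two_pos (pow_pos hηpos 2)) (hL i)) (hppos i)] :
          (0:ℝ) ≤ 2 * η ^ 2 * L i * p i)
      apply mul_nonneg hτpos.le
      have h1 := sq_nonneg (η * p i * coordGrad f xk1 i - τ * η * L i * (zk i - xk1 i))
      have h2 : 0 ≤ τ * η * L i * (p i * L i ^ β - τ * η * L i) * (zk i - xk1 i) ^ 2 :=
        mul_nonneg (mul_nonneg (mul_pos (mul_pos hτpos hηpos) (hL i)).le
          (sub_nonneg.mpr (hpn i))) (sq_nonneg _)
      linarith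
    have hsplit : (∑ i, (τ * (p i * (coordGrad f xk1 i ^ 2 / (2 * L i)))
        - τ ^ 2 * (coordGrad f xk1 i * (zk i - xk1 i))
        + τ ^ 2 / (2 * η) * (L i ^ β * (zk i - xk1 i) ^ 2)))
        = τ * (∑ i, p i * (coordGrad f xk1 i ^ 2 / (2 * L i)))
          - τ ^ 2 * (∑ i, coordGrad f xk1 i * (zk i - xk1 i))
          + τ ^ 2 / (2 * η) * wnormSq L β (zk - xk1) := by
      simp only [wnormSq, Pi.sub_apply]
      rw [Finset.sum_add_distrib, Finset.sum_sub_distrib, ← Finset.mul_sum, ← Finset.mul_sum,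
        ← Finset.mul_sum]
    rw [← hsplit]
    exact Finset.sum_nonneg fun i _ => hterm i
  -- componentwise description of Z i
  have hZj : ∀ i j, Z i j - xstar j
      = ((1 - τ) * (zk j - xstar j) + τ * (xk1 j - xstar j))
        - ((1 - τ) * (η / (p i * L i ^ β) * coordGrad f xk1 i)) * basisVec i j := by
    intro i j
    rw [hZ i]
    simp only [Pi.smul_apply, Pi.sub_apply, Pi.add_apply, smul_eq_mul]
    rw [hcinv]
    linear_combination (xk1 j) * hkey
  have hwZ : ∀ i, wnormSq L β (Z i - xstar)
      = (∑ j, L j ^ β * ((1 - τ) * (zk j - xstar j) + τ * (xk1 j - xstar j)) ^ 2)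
        - 2 * ((1 - τ) * (η / (p i * L i ^ β) * coordGrad f xk1 i)) * (L i ^ β)
            * ((1 - τ) * (zk i - xstar i) + τ * (xk1 i - xstar i))
        + ((1 - τ) * (η / (p i * L i ^ β) * coordGrad f xk1 i)) ^ 2 * (L i ^ β) := by
    intro i
    have h1 : wnormSq L β (Z i - xstar)
        = ∑ j, (fun j => L j ^ β) j *
            ((fun j => (1 - τ) * (zk j - xstar j) + τ * (xk1 j - xstar j)) j
              - ((1 - τ) * (η / (p i * L i ^ β) * coordGrad f xk1 i)) * basisVec i j) ^ 2 := by
      simp only [wnormSq, Pi.sub_apply]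
      exact Finset.sum_congr rfl fun j _ => by rw [hZj i j]
    rw [h1, wsum_shift]
  -- weighted sums of the mirror step
  have hpqN : ∀ i, p i * (η / (p i * L i ^ β) * coordGrad f xk1 i) * (L i ^ β)
      = η * coordGrad f xk1 i := by
    intro i
    field_simp [(hppos i).ne', (hNpos i).ne']
  have hLid : ∀ i, Sα ^ 2 * (p i) ^ 2 * (L i ^ β) = L i := by
    intro i
    rw [hp i]
    field_simp
    linear_combination hLsplit i
  have hpq2N : ∀ i, p i * (η / (p i * L i ^ β) * coordGrad f xk1 i) ^ 2 * (L i ^ β)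
      = 2 * (η / τ) * (p i * (coordGrad f xk1 i ^ 2 / (2 * L i))) := by
    intro i
    have h1 := hLid i
    have hc : p i * (η / (p i * L i ^ β) * coordGrad f xk1 i) ^ 2 * L i ^ β
        = η ^ 2 * coordGrad f xk1 i ^ 2 / (p i * L i ^ β) := by
      field_simp [(hppos i).ne', (hNpos i).ne']
    have hd : (2:ℝ) * (η / τ) * (p i * (coordGrad f xk1 i ^ 2 / (2 * L i)))
        = η * p i * coordGrad f xk1 i ^ 2 / (τ * L i) := by
      field_simp [hτpos.ne', (hL i).ne']
    rw [hc, hd, div_eq_div_iff (mul_pos (hppos i) (hNpos i)).ne'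
      (mul_pos hτpos (hL i)).ne']
    linear_combination (-(η ^ 2 * coordGrad f xk1 i ^ 2 * τ)) * h1
      + (η * p i ^ 2 * coordGrad f xk1 i ^ 2 * L i ^ β) * hηrole
  have hA5 : (∑ i, p i * wnormSq L β (Z i - xstar))
      = (∑ j, L j ^ β * ((1 - τ) * (zk j - xstar j) + τ * (xk1 j - xstar j)) ^ 2)
        - 2 * (1 - τ) * η * (∑ j, coordGrad f xk1 j
            * ((1 - τ) * (zk j - xstar j) + τ * (xk1 j - xstar j)))
        + 2 * (η / τ) * (1 - τ) ^ 2 * (∑ i, p i * (coordGrad f xk1 i ^ 2 / (2 * L i))) := by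
    have hterm : ∀ i, p i * wnormSq L β (Z i - xstar)
        = p i * (∑ j, L j ^ β * ((1 - τ) * (zk j - xstar j) + τ * (xk1 j - xstar j)) ^ 2)
          + (-(2 * (1 - τ) * η)) * (coordGrad f xk1 i
              * ((1 - τ) * (zk i - xstar i) + τ * (xk1 i - xstar i)))
          + (2 * (η / τ) * (1 - τ) ^ 2) * (p i * (coordGrad f xk1 i ^ 2 / (2 * L i))) := by
      intro i
      rw [hwZ i]
      linear_combination (-2 * (1 - τ) * ((1 - τ) * (zk i - xstar i) + τ * (xk1 i - xstar i)))
          * hpqN i + (1 - τ) ^ 2 * hpq2N i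
    rw [Finset.sum_congr rfl fun i _ => hterm i]
    rw [Finset.sum_add_distrib, Finset.sum_add_distrib, ← Finset.sum_mul, hpsum, one_mul,
      ← Finset.mul_sum, ← Finset.mul_sum]
    ring
  have hGm : (∑ j, coordGrad f xk1 j * ((1 - τ) * (zk j - xstar j) + τ * (xk1 j - xstar j)))
      = (1 - τ) * (∑ i, coordGrad f xk1 i * (zk i - xk1 i))
        + (∑ i, coordGrad f xk1 i * (xk1 i - xstar i)) := by
    rw [Finset.mul_sum, ← Finset.sum_add_distrib]
    exact Finset.sum_congr rfl fun j _ => by ring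
  have hWm : (∑ j, L j ^ β * ((1 - τ) * (zk j - xstar j) + τ * (xk1 j - xstar j)) ^ 2)
      = (1 - τ) * wnormSq L β (zk - xstar) + τ * wnormSq L β (xk1 - xstar)
        - (1 - τ) * τ * wnormSq L β (zk - xk1) := by
    simp only [wnormSq, Pi.sub_apply]
    rw [Finset.mul_sum, Finset.mul_sum, Finset.mul_sum, ← Finset.sum_add_distrib,
      ← Finset.sum_sub_distrib]
    exact Finset.sum_congr rfl fun j _ => by ring
  have hE1 : τ / (2 * η * (1 - τ)) * (∑ i, p i * wnormSq L β (Z i - xstar))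
      = τ / (2 * η) * wnormSq L β (zk - xstar)
        + τ * σβ / 2 * wnormSq L β (xk1 - xstar)
        - τ ^ 2 / (2 * η) * wnormSq L β (zk - xk1)
        - τ * ((1 - τ) * (∑ i, coordGrad f xk1 i * (zk i - xk1 i))
            + (∑ i, coordGrad f xk1 i * (xk1 i - xstar i)))
        + (1 - τ) * (∑ i, p i * (coordGrad f xk1 i ^ 2 / (2 * L i))) := by
    rw [hA5, hWm, hGm, hσval]
    field_simp
    all_goals ring
  have hgoal_eq : (∑ i, p i * ((f (Y i) - f xstar)
        + τ / (2 * η * (1 - τ)) * wnormSq L β (Z i - xstar)))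
      = (∑ i, p i * f (Y i)) - f xstar
        + τ / (2 * η * (1 - τ)) * (∑ i, p i * wnormSq L β (Z i - xstar)) := by
    simp only [mul_add, mul_sub]
    rw [Finset.sum_add_distrib, Finset.sum_sub_distrib, ← Finset.sum_mul, hpsum, one_mul]
    congr 1
    rw [Finset.mul_sum]
    exact Finset.sum_congr rfl fun i _ => by ring
  have hcoef : (1 - τ) * (τ / (2 * η * (1 - τ))) = τ / (2 * η) := by
    field_simp
  have hRHS : (1 - τ) * ((f yk - f xstar)
        + τ / (2 * η * (1 - τ)) * wnormSq L β (zk - xstar))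
      = (1 - τ) * f yk - (1 - τ) * f xstar
        + τ / (2 * η) * wnormSq L β (zk - xstar) := by
    linear_combination (wnormSq L β (zk - xstar)) * hcoef
  rw [hgoal_eq, hRHS]
  linarith [hI1, mul_le_mul_of_nonneg_left hI2 hspos.le,
    mul_le_mul_of_nonneg_left hI3 hτpos.le, hA4, hE3, hE1]
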